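/- Let q be a prime power and m, r positive integers with gcd(q-1, m) = 1 and r² ≡ 1 (mod (q^m-1)/(q-1)). Let h ∈ F_q[x]. Then f(x) = x^r·h(x^((q^m-1)/(q-1))) is an involution on F_{q^m} if and only if g(x) = x^r·h(x)^m is an involution on F_q. -/

import Mathlib

theorem stmt_18 (F K : Type*) [Field F] [Fintype F] [Field K] [Fintype K] [Algebra F K]
    (q m r : ℕ) (hq : Fintype.card F = q) (hK : Fintype.card K = q ^ m)
    (hm : 0 < m) (hr : 0 < r)
    (hgcd : Nat.gcd (q - 1) m = 1)
    (hrmod : r ^ 2 ≡ 1 [MOD (q ^ m - 1) / (q - 1)])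
    (h : Polynomial F)
    (f : K → K)
    (hf : ∀ x, f x = x ^ r * (h.map (algebraMap F K)).eval (x ^ ((q ^ m - 1) / (q - 1))))
    (g : F → F)
    (hg : ∀ x, g x = x ^ r * (h.eval x) ^ m) :
    (∀ x : K, f (f x) = x) ↔ (∀ x : F, g (g x) = x) := by
  classical
  set φ := algebraMap F K with hφdef
  set s := (q ^ m - 1) / (q - 1) with hs_def
  have hq2 : 1 < q := hq ▸ Fintype.one_lt_card
  have hq0 : 0 < q - 1 := by omega
  have hqm1 : 1 < q ^ m := Nat.one_lt_pow hm.ne' hq2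
  have hgeom : (∑ i ∈ Finset.range m, q ^ i) * (q - 1) = q ^ m - 1 := by
    have h1 := geom_sum_mul (q : ℤ) m
    have : ((∑ i ∈ Finset.range m, q ^ i) * (q - 1) : ℕ) = ((q ^ m - 1 : ℕ) : ℤ) := by
      push_cast [Nat.cast_sub (by omega : 1 ≤ q), Nat.cast_sub hqm1.le]
      exact_mod_cast h1
    exact_mod_cast this
  have hs_eq : s = ∑ i ∈ Finset.range m, q ^ i := by
    rw [hs_def, ← hgeom, Nat.mul_div_cancel _ hq0]
  have hs_mul : s * (q - 1) = q ^ m - 1 := by rw [hs_eq]; exact hgeom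
  have hs_pos : 0 < s := by
    rcases Nat.eq_zero_or_pos s with h0 | h0
    · rw [h0, zero_mul] at hs_mul; omega
    · exact h0
  have hsm_mod : s ≡ m [MOD q - 1] := by
    have hq1 : q ≡ 1 [MOD q - 1] :=
      ((Nat.modEq_iff_dvd' (by omega : 1 ≤ q)).mpr dvd_rfl).symm
    have haux : ∀ n : ℕ, (∑ i ∈ Finset.range n, q ^ i) ≡ n [MOD q - 1] := by
      intro n
      induction n with
      | zero => rfl
      | succ n ih =>
        rw [Finset.sum_range_succ]
        have : q ^ n ≡ 1 [MOD q - 1] := by simpa using hq1.pow n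
        exact ih.add this
    rw [hs_eq]
    exact haux m
  have hφinj : Function.Injective φ := (algebraMap F K).injective
  -- y ^ s = y ^ m in F for nonzero y
  have hys : ∀ y : F, y ≠ 0 → y ^ s = y ^ m := by
    intro y hy
    set yu : Fˣ := Units.mk0 y hy with hyu
    have h1 : yu ^ (q - 1) = 1 := by
      ext
      push_cast [hyu]
      have := FiniteField.pow_card_sub_one_eq_one y hy; rwa [hq] at this
    have h2 : yu ^ s = yu ^ m :=
      pow_eq_pow_iff_modEq.mpr (hsm_mod.of_dvd (orderOf_dvd_of_pow_eq_one h1))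
    calc y ^ s = ((yu ^ s : Fˣ) : F) := by rw [hyu]; push_cast; rfl
      _ = ((yu ^ m : Fˣ) : F) := by rw [h2]
      _ = y ^ m := by rw [hyu]; push_cast; rfl
  have hpow_sm : ∀ y : F, (φ y) ^ s = φ (y ^ m) := by
    intro y
    by_cases hy : y = 0
    · subst hy; simp [zero_pow hs_pos.ne', zero_pow hm.ne']
    · rw [← map_pow, hys y hy]
  -- elements fixed by the q-Frobenius are in the image of F
  have hfix : ∀ z : K, z ^ q = z → ∃ y : F, φ y = z := by
    intro z hz
    have hPne : (Polynomial.X ^ q - Polynomial.X : Polynomial K) ≠ 0 :=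
      FiniteField.X_pow_card_sub_X_ne_zero K hq2
    set T : Finset K := Finset.univ.image φ with hT
    have hTcard : T.card = q := by
      rw [hT, Finset.card_image_of_injective _ hφinj, Finset.card_univ, hq]
    have hsub : T ⊆ (Polynomial.X ^ q - Polynomial.X : Polynomial K).roots.toFinset := by
      intro t ht
      rw [hT, Finset.mem_image] at ht
      obtain ⟨y, -, rfl⟩ := ht
      rw [Multiset.mem_toFinset, Polynomial.mem_roots hPne]
      have : y ^ q = y := by have := FiniteField.pow_card y; rwa [hq] at this
      simp [Polynomial.IsRoot, ← map_pow, this]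
    have hcard_le : (Polynomial.X ^ q - Polynomial.X : Polynomial K).roots.toFinset.card ≤ q := by
      calc (Polynomial.X ^ q - Polynomial.X : Polynomial K).roots.toFinset.card
          ≤ Multiset.card (Polynomial.X ^ q - Polynomial.X : Polynomial K).roots :=
            Multiset.toFinset_card_le _
        _ ≤ (Polynomial.X ^ q - Polynomial.X : Polynomial K).natDegree :=
            Polynomial.card_roots' _
        _ = q := FiniteField.X_pow_card_sub_X_natDegree_eq K hq2
    have hTeq : T = (Polynomial.X ^ q - Polynomial.X : Polynomial K).roots.toFinset :=
      Finset.eq_of_subset_of_card_le hsub (by omega)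
    have hzmem : z ∈ T := by
      rw [hTeq, Multiset.mem_toFinset, Polynomial.mem_roots hPne]
      simp [Polynomial.IsRoot, hz]
    rw [hT, Finset.mem_image] at hzmem
    obtain ⟨y, -, hy⟩ := hzmem
    exact ⟨y, hy⟩
  have hxqm : ∀ x : K, x ≠ 0 → x ^ (q ^ m - 1) = 1 := by
    intro x hx
    have := FiniteField.pow_card_sub_one_eq_one x hx; rwa [hK] at this
  -- the key identity : f z ^ s = φ (g y) whenever φ y = z ^ s
  have hkey : ∀ (z : K) (y : F), φ y = z ^ s → f z ^ s = φ (g y) := by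
    intro z y hy
    have heval : (h.map φ).eval (z ^ s) = φ (h.eval y) := by
      rw [← hy, Polynomial.eval_map, Polynomial.eval₂_at_apply]
    rw [hf, heval, mul_pow, ← pow_mul, mul_comm r s, pow_mul, ← hy, hpow_sm,
      ← map_pow, ← map_mul, hg]
  have hg0 : g 0 = 0 := by rw [hg]; simp [zero_pow hr.ne']
  constructor
  · -- forward direction
    intro H y
    by_cases hy : y = 0
    · subst hy; rw [hg0, hg0]
    · -- surjectivity of the s-power map onto φ(F)
      have hu : φ y ≠ 0 := fun h0 => hy (hφinj (by simpa using h0))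
      obtain ⟨g₀, hg₀⟩ := IsCyclic.exists_generator (α := Kˣ)
      have horder : orderOf g₀ = q ^ m - 1 := by
        rw [orderOf_eq_card_of_forall_mem_zpowers hg₀, Nat.card_eq_fintype_card,
          Fintype.card_units, hK]
      set u : Kˣ := Units.mk0 (φ y) hu with hu_def
      have hmem : u ∈ Submonoid.powers g₀ := mem_powers_iff_mem_zpowers.mpr (hg₀ u)
      obtain ⟨t, ht0⟩ := hmem
      have ht : g₀ ^ t = u := ht0
      have hu1 : u ^ (q - 1) = 1 := by
        have hy1 : y ^ (q - 1) = 1 := by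
          have := FiniteField.pow_card_sub_one_eq_one y hy; rwa [hq] at this
        ext
        rw [Units.val_pow_eq_pow_val, hu_def, Units.val_mk0, ← map_pow, hy1, map_one,
          Units.val_one]
      have hdvd : s ∣ t := by
        have h1 : g₀ ^ (t * (q - 1)) = 1 := by rw [pow_mul, ht, hu1]
        have h2 : (q ^ m - 1) ∣ t * (q - 1) := horder ▸ orderOf_dvd_of_pow_eq_one h1
        rw [← hs_mul] at h2
        exact (Nat.mul_dvd_mul_iff_right hq0).mp h2
      set z : K := ((g₀ ^ (t / s) : Kˣ) : K) with hz_def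
      have hz : φ y = z ^ s := by
        have hu2 : (g₀ ^ (t / s)) ^ s = u := by
          rw [← pow_mul, Nat.div_mul_cancel hdvd, ht]
        calc φ y = ((u : Kˣ) : K) := by rw [hu_def, Units.val_mk0]
          _ = (((g₀ ^ (t / s)) ^ s : Kˣ) : K) := by rw [hu2]
          _ = z ^ s := by rw [hz_def]; push_cast; rfl
      have h1 : f z ^ s = φ (g y) := hkey z y hz
      have h2 : f (f z) ^ s = φ (g (g y)) := hkey (f z) (g y) h1.symm
      rw [H z, ← hz] at h2
      exact (hφinj h2).symm
  · -- backward direction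
    intro H x
    by_cases hx : x = 0
    · subst hx
      have hf0 : f 0 = 0 := by rw [hf]; simp [zero_pow hr.ne']
      rw [hf0, hf0]
    · have hxs_ne : x ^ s ≠ 0 := pow_ne_zero _ hx
      have hxs_fix : (x ^ s) ^ q = x ^ s := by
        have h1 : (x ^ s) ^ (q - 1) = 1 := by
          rw [← pow_mul, hs_mul]; exact hxqm x hx
        calc (x ^ s) ^ q = (x ^ s) ^ (q - 1 + 1) := by congr 1; omega
          _ = x ^ s := by rw [pow_succ, h1, one_mul]
      obtain ⟨y, hy⟩ := hfix (x ^ s) hxs_fix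
      have hy0 : y ≠ 0 := by
        intro h0; subst h0
        exact hxs_ne (by simpa using hy.symm)
      have hy1 : y ^ (q - 1) = 1 := by
        have := FiniteField.pow_card_sub_one_eq_one y hy0; rwa [hq] at this
      -- nonvanishing of h at y and g y
      have hHy : h.eval y ≠ 0 := by
        intro h0
        have hgy : g y = 0 := by rw [hg, h0, zero_pow hm.ne', mul_zero]
        have : y = 0 := by rw [← H y, hgy, hg0]
        exact hy0 this
      have hGy : h.eval (g y) ≠ 0 := by
        intro h0
        have : g (g y) = 0 := by rw [hg (g y), h0, zero_pow hm.ne', mul_zero]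
        exact hy0 (by rw [← H y, this])
      -- r² = s k + 1
      have hrdvd : s ∣ r ^ 2 - 1 :=
        (Nat.modEq_iff_dvd' (Nat.one_le_pow _ _ hr)).mp hrmod.symm
      obtain ⟨k, hk⟩ := hrdvd
      have hr2 : r ^ 2 = s * k + 1 := by
        have : 1 ≤ r ^ 2 := Nat.one_le_pow _ _ hr
        omega
      -- compute f (f x)
      have hfx : f x = x ^ r * φ (h.eval y) := by
        rw [hf, ← hy, Polynomial.eval_map, Polynomial.eval₂_at_apply]
      have hfxs : f x ^ s = φ (g y) := hkey x y hy
      have hffx : f (f x) = x ^ (r ^ 2) * φ (h.eval y ^ r * h.eval (g y)) := by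
        rw [hf (f x), hfxs, Polynomial.eval_map, Polynomial.eval₂_at_apply, hfx,
          mul_pow, ← pow_mul, map_mul, map_pow]
        ring_nf
      set A : F := y ^ k * (h.eval y ^ r * h.eval (g y)) with hA_def
      have hA_ne : A ≠ 0 := by
        rw [hA_def]
        exact mul_ne_zero (pow_ne_zero _ hy0)
          (mul_ne_zero (pow_ne_zero _ hHy) hGy)
      have hAq : A ^ (q - 1) = 1 := by
        have := FiniteField.pow_card_sub_one_eq_one A hA_ne; rwa [hq] at this
      have hAm : A ^ m = 1 := by
        have e1 : (g y) ^ r * h.eval (g y) ^ m = y := by rw [← hg (g y)]; exact H y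
        have hHyeq : (y ^ r * h.eval y ^ m) ^ r * h.eval (g y) ^ m = y := by
          rw [← hg y]; exact e1
        have hyr2 : y ^ (r ^ 2) = y * (y ^ m) ^ k := by
          rw [hr2, pow_add, pow_one, pow_mul, hys y hy0]; ring
        have expand : y * ((y ^ m) ^ k * (h.eval y ^ (m * r) * h.eval (g y) ^ m)) = y := by
          calc y * ((y ^ m) ^ k * (h.eval y ^ (m * r) * h.eval (g y) ^ m))
              = y ^ (r ^ 2) * h.eval y ^ (m * r) * h.eval (g y) ^ m := by
                rw [hyr2]; ring
            _ = (y ^ r * h.eval y ^ m) ^ r * h.eval (g y) ^ m := by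
                rw [mul_pow, ← pow_mul, ← pow_mul, pow_two]
            _ = y := hHyeq
        have hcancel : (y ^ m) ^ k * (h.eval y ^ (m * r) * h.eval (g y) ^ m) = 1 :=
          mul_left_cancel₀ hy0 (by rw [expand, mul_one])
        rw [hA_def]
        calc (y ^ k * (h.eval y ^ r * h.eval (g y))) ^ m
            = (y ^ m) ^ k * (h.eval y ^ (m * r) * h.eval (g y) ^ m) := by
              rw [mul_pow, mul_pow, ← pow_mul, ← pow_mul, ← pow_mul, mul_comm k m,
                mul_comm r m]
          _ = 1 := hcancel
      have hA1 : A = 1 := by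
        have : A ^ Nat.gcd (q - 1) m = 1 := pow_gcd_eq_one.mpr ⟨hAq, hAm⟩
        rwa [hgcd, pow_one] at this
      rw [hffx, hr2, pow_add, pow_one, pow_mul, ← hy, ← map_pow]
      calc φ (y ^ k) * x * φ (h.eval y ^ r * h.eval (g y))
          = x * φ (y ^ k * (h.eval y ^ r * h.eval (g y))) := by simp only [map_mul]; ring
        _ = x := by
            rw [show y ^ k * (h.eval y ^ r * h.eval (g y)) = A from rfl, hA1,
              map_one, mul_one]
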